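/- Let Ω be a compact Hausdorff space with its Borel σ-algebra, let E and F be real Banach spaces, let (μ_n) be a sequence of countably additive E*-valued Borel vector measures on Ω, each of bounded variation, and let (y_n) be a sequence in F with Σ_n |μ_n|(Ω)·‖y_n‖ < ∞. For each Borel set B ⊆ Ω, define the nuclear operator G(B) : E → F by G(B)(e) = Σ_n (μ_n(B)(e)) • y_n. Then the nuclear variation of G is finite; more precisely, for every finite partition {B_1, …, B_k} of Ω into Borel sets, Σ_i ‖G(B_i)‖_nuc ≤ Σ_n |μ_n|(Ω)·‖y_n‖. (Proposition 1(ii), bounded nuclear variation.) -/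
import Mathlib


open MeasureTheory Filter Topology

section Defs

variable {X Y : Type*} [NormedAddCommGroup X] [NormedSpace ℝ X]
  [NormedAddCommGroup Y] [NormedSpace ℝ Y]

/-- A bounded linear operator is nuclear if it admits a representation
`S x = Σ_n x'_n(x) • y_n` with `Σ_n ‖x'_n‖·‖y_n‖ < ∞`. -/
def IsNuclear (S : X →L[ℝ] Y) : Prop :=
  ∃ (x' : ℕ → (X →L[ℝ] ℝ)) (y : ℕ → Y),
    Summable (fun n => ‖x' n‖ * ‖y n‖) ∧ ∀ x, HasSum (fun n => x' n x • y n) (S x)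

/-- The nuclear norm: the infimum of `Σ_n ‖x'_n‖·‖y_n‖` over all nuclear
representations of `S`. -/
noncomputable def nuclearNorm (S : X →L[ℝ] Y) : ℝ :=
  sInf {c : ℝ | ∃ (x' : ℕ → (X →L[ℝ] ℝ)) (y : ℕ → Y),
    Summable (fun n => ‖x' n‖ * ‖y n‖) ∧ (∀ x, HasSum (fun n => x' n x • y n) (S x)) ∧
    c = ∑' n, ‖x' n‖ * ‖y n‖}

variable {Ω : Type*} [TopologicalSpace Ω]

/-- The elementary tensor `f ⊗ e : ω ↦ f(ω) • e` in `C(Ω, E)`. -/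
noncomputable def tensor (f : C(Ω, ℝ)) (e : X) : C(Ω, X) :=
  ⟨fun ω => f ω • e, (map_continuous f).smul continuous_const⟩

theorem tensor_apply (f : C(Ω, ℝ)) (e : X) (ω : Ω) : tensor f e ω = f ω • e := rfl

variable [CompactSpace Ω]

theorem norm_tensor_le (f : C(Ω, ℝ)) (e : X) : ‖tensor f e‖ ≤ ‖f‖ * ‖e‖ := by
  refine (ContinuousMap.norm_le _ (by positivity)).2 fun ω => ?_
  rw [tensor_apply, norm_smul]
  exact mul_le_mul_of_nonneg_right (f.norm_coe_le_norm ω) (norm_nonneg e)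

/-- The operator `T^# f : E → F`, `e ↦ T (f ⊗ e)`, induced by `T : C(Ω,E) → F`. -/
noncomputable def sharp (T : C(Ω, X) →L[ℝ] Y) (f : C(Ω, ℝ)) : X →L[ℝ] Y :=
  LinearMap.mkContinuous
    { toFun := fun e => T (tensor f e)
      map_add' := fun a b => by
        show T (tensor f (a + b)) = T (tensor f a) + T (tensor f b)
        rw [show tensor f (a + b) = tensor f a + tensor f b from
          ContinuousMap.ext fun ω => smul_add _ _ _, map_add]
      map_smul' := fun c a => by
        show T (tensor f (c • a)) = c • T (tensor f a)
        rw [show tensor f (c • a) = c • tensor f a from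
          ContinuousMap.ext fun ω => smul_comm _ _ _, _root_.map_smul] }
    (‖T‖ * ‖f‖)
    (fun e => by
      calc ‖T (tensor f e)‖ ≤ ‖T‖ * ‖tensor f e‖ := T.le_opNorm _
        _ ≤ ‖T‖ * (‖f‖ * ‖e‖) :=
          mul_le_mul_of_nonneg_left (norm_tensor_le f e) (norm_nonneg T)
        _ = ‖T‖ * ‖f‖ * ‖e‖ := (mul_assoc _ _ _).symm)

theorem sharp_apply (T : C(Ω, X) →L[ℝ] Y) (f : C(Ω, ℝ)) (e : X) :
    sharp T f e = T (tensor f e) := rfl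

/-- The set of sums `Σ_i ‖m(A_i)‖` over finite families of pairwise disjoint
measurable subsets of `B`. -/
def partitionSums {S : Type*} [MeasurableSpace S] (m : Set S → X) (B : Set S) : Set ℝ :=
  {c : ℝ | ∃ (k : ℕ) (A : Fin k → Set S), (∀ i, MeasurableSet (A i)) ∧
    Pairwise (Function.onFun Disjoint A) ∧ (∀ i, A i ⊆ B) ∧ c = ∑ i, ‖m (A i)‖}

/-- The variation `|m|(B)` of a vector measure. -/
noncomputable def variation {S : Type*} [MeasurableSpace S] (m : Set S → X) (B : Set S) : ℝ :=
  sSup (partitionSums m B)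

/-- A Banach space `X` has the Radon–Nikodym property if every countably additive
`X`-valued vector measure of bounded variation which is absolutely continuous with
respect to a finite measure `μ` has a Bochner-integrable density with respect to `μ`. -/
def HasRNP (X : Type*) [NormedAddCommGroup X] [NormedSpace ℝ X] : Prop :=
  ∀ (S : Type) (_ : MeasurableSpace S) (μ : Measure S), IsFiniteMeasure μ →
    ∀ m : VectorMeasure S X, BddAbove (partitionSums (⇑m) Set.univ) →
      (∀ A : Set S, MeasurableSet A → μ A = 0 → m A = 0) →
      ∃ g : S → X, Integrable g μ ∧ ∀ A : Set S, MeasurableSet A → m A = ∫ x in A, g x ∂μ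

end Defs

/-- Proposition 1(ii), bounded nuclear variation: for every finite Borel partition
`{B_1, …, B_k}` of `Ω`, `Σ_i ‖G(B_i)‖_nuc ≤ Σ_n |μ_n|(Ω)·‖y_n‖`. -/
theorem nuclear_variation_bound {Ω : Type*} [TopologicalSpace Ω] [CompactSpace Ω] [T2Space Ω]
    [MeasurableSpace Ω] [BorelSpace Ω]
    {E F : Type*} [NormedAddCommGroup E] [NormedSpace ℝ E] [CompleteSpace E]
    [NormedAddCommGroup F] [NormedSpace ℝ F] [CompleteSpace F]
    (μ : ℕ → VectorMeasure Ω (E →L[ℝ] ℝ))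
    (hbv : ∀ n, BddAbove (partitionSums (⇑(μ n)) Set.univ))
    (y : ℕ → F)
    (hsum : Summable fun n => variation (⇑(μ n)) Set.univ * ‖y n‖)
    (G : Set Ω → (E →L[ℝ] F))
    (hG : ∀ B : Set Ω, MeasurableSet B → ∀ e : E, HasSum (fun n => μ n B e • y n) (G B e))
    (k : ℕ) (B : Fin k → Set Ω)
    (hmeas : ∀ i, MeasurableSet (B i))
    (hdisj : Pairwise (Function.onFun Disjoint B))
    (hcover : ⋃ i, B i = Set.univ) :
    ∑ i, nuclearNorm (G (B i)) ≤ ∑' n, variation (⇑(μ n)) Set.univ * ‖y n‖ := by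
  -- single sets give partition sums
  have hsingle : ∀ n (A : Set Ω), MeasurableSet A →
      ‖μ n A‖ ≤ variation (⇑(μ n)) Set.univ := by
    intro n A hA
    refine le_csSup (hbv n) ⟨1, fun _ => A, fun _ => hA, ?_, fun _ => Set.subset_univ _, by simp⟩
    intro i j hij
    exact absurd (Subsingleton.elim i j) hij
  -- full partition gives partition sum
  have hpart : ∀ n, ∑ i, ‖μ n (B i)‖ ≤ variation (⇑(μ n)) Set.univ := by
    intro n
    exact le_csSup (hbv n) ⟨k, B, hmeas, hdisj, fun _ => Set.subset_univ _, rfl⟩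
  have hynn : ∀ n, (0:ℝ) ≤ ‖y n‖ := fun n => norm_nonneg _
  have hsummable : ∀ (A : Set Ω), MeasurableSet A →
      Summable (fun n => ‖μ n A‖ * ‖y n‖) := by
    intro A hA
    refine Summable.of_nonneg_of_le (fun n => mul_nonneg (norm_nonneg _) (hynn n))
      (fun n => mul_le_mul_of_nonneg_right (hsingle n A hA) (hynn n)) hsum
  have key : ∀ i, nuclearNorm (G (B i)) ≤ ∑' n, ‖μ n (B i)‖ * ‖y n‖ := by
    intro i
    refine csInf_le ?_ ?_
    · refine ⟨0, fun c hc => ?_⟩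
      obtain ⟨x', y', hs, _, rfl⟩ := hc
      exact tsum_nonneg fun n => mul_nonneg (norm_nonneg _) (norm_nonneg _)
    · exact ⟨fun n => μ n (B i), y, hsummable _ (hmeas i), hG _ (hmeas i), rfl⟩
  calc ∑ i, nuclearNorm (G (B i)) ≤ ∑ i, ∑' n, ‖μ n (B i)‖ * ‖y n‖ :=
        Finset.sum_le_sum fun i _ => key i
    _ = ∑' n, ∑ i, ‖μ n (B i)‖ * ‖y n‖ :=
        (Summable.tsum_finsetSum fun i _ => hsummable _ (hmeas i)).symm
    _ ≤ ∑' n, variation (⇑(μ n)) Set.univ * ‖y n‖ := by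
        refine Summable.tsum_le_tsum (fun n => ?_) ?_ hsum
        · rw [← Finset.sum_mul]
          exact mul_le_mul_of_nonneg_right (hpart n) (hynn n)
        · exact (hasSum_sum fun i _ => (hsummable _ (hmeas i)).hasSum).summable
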